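/- If X is a separable metrizable space that is cohesive and almost zero-dimensional, then for every n ≥ 1 the hyperspaces F_n(X), F(X) and K(X), with the Vietoris topology, are cohesive and almost zero-dimensional. -/

import Mathlib

open Set Topology

noncomputable section

/-- The Vietoris topology on the powerset of `X` induced by a topology `τ`,
generated by the sets `{F | F ⊆ U}` and `{F | F ∩ U ≠ ∅}` for `U` a nonempty `τ`-open set. -/
def VietorisTop {X : Type*} (τ : TopologicalSpace X) : TopologicalSpace (Set X) :=
  TopologicalSpace.generateFrom
    ({S : Set (Set X) | ∃ U : Set X, IsOpen[τ] U ∧ U.Nonempty ∧ S = {F : Set X | F ⊆ U}} ∪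
     {S : Set (Set X) | ∃ U : Set X, IsOpen[τ] U ∧ U.Nonempty ∧ S = {F : Set X | (F ∩ U).Nonempty}})

/-- The hyperspace `K(X)` of nonempty compact subsets of `X`. -/
def HypK (X : Type*) [TopologicalSpace X] : Type _ := {F : Set X // F.Nonempty ∧ IsCompact F}

/-- `K(X)` carries the Vietoris topology. -/
instance (X : Type*) [τ : TopologicalSpace X] : TopologicalSpace (HypK X) :=
  (VietorisTop τ).induced Subtype.val

/-- The `n`-th symmetric product `F_n(X)`: nonempty subsets of `X` with at most `n` points. -/
def HypFn (n : ℕ) (X : Type*) [TopologicalSpace X] : Type _ :=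
  {F : Set X // F.Nonempty ∧ F.Finite ∧ F.ncard ≤ n}

/-- `F_n(X)` carries the Vietoris topology. -/
instance (n : ℕ) (X : Type*) [τ : TopologicalSpace X] : TopologicalSpace (HypFn n X) :=
  (VietorisTop τ).induced Subtype.val

/-- The hyperspace `F(X)` of nonempty finite subsets of `X`. -/
def HypFin (X : Type*) [TopologicalSpace X] : Type _ := {F : Set X // F.Nonempty ∧ F.Finite}

/-- `F(X)` carries the Vietoris topology. -/
instance (X : Type*) [τ : TopologicalSpace X] : TopologicalSpace (HypFin X) :=
  (VietorisTop τ).induced Subtype.val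

/-- A space is almost zero-dimensional if every point has a neighborhood basis consisting of
sets each of which is an intersection of clopen sets. -/
def IsAZD (X : Type*) [TopologicalSpace X] : Prop :=
  ∀ x : X, ∀ U ∈ nhds x, ∃ V ∈ nhds x, V ⊆ U ∧
    ∃ C : Set (Set X), (∀ c ∈ C, IsClopen c) ∧ V = ⋂₀ C

/-- `X` is `𝒜`-cohesive: every point has a neighborhood containing no nonempty proper
subset of an element `A ∈ 𝒜` that is clopen in the subspace topology of `A`. -/
def CohesiveWrt (X : Type*) [TopologicalSpace X] (𝒜 : Set (Set X)) : Prop :=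
  ∀ x : X, ∃ U ∈ nhds x, ∀ A ∈ 𝒜, ∀ C : Set X,
    C ⊆ U → C ⊆ A → C.Nonempty → C ≠ A → ¬ IsClopen {y : A | (y : X) ∈ C}

/-- A space is cohesive if it is `{X}`-cohesive. -/
def Cohesive (X : Type*) [TopologicalSpace X] : Prop := CohesiveWrt X {Set.univ}

/-- Erdős space: the rational points of the Hilbert space `ℓ²`. -/
def ErdosSpace : Type :=
  {x : lp (fun _ : ℕ => ℝ) 2 // ∀ n : ℕ, ∃ q : ℚ, x.val n = (q : ℝ)}

instance : TopologicalSpace ErdosSpace := by unfold ErdosSpace; infer_instance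

/-- Complete Erdős space: points of `ℓ²` all of whose coordinates lie in `{0} ∪ {1/m : m ≥ 1}`. -/
def CompleteErdosSpace : Type :=
  {x : lp (fun _ : ℕ => ℝ) 2 // ∀ n : ℕ, x.val n = 0 ∨ ∃ m : ℕ, 0 < m ∧ x.val n = 1 / (m : ℝ)}

instance : TopologicalSpace CompleteErdosSpace := by unfold CompleteErdosSpace; infer_instance

namespace HypAux

variable {X : Type*} [tX : TopologicalSpace X]

/-- generic hyperspace over a predicate -/
def Hy (P : Set X → Prop) : Type _ := {F : Set X // P F}

instance (P : Set X → Prop) : TopologicalSpace (Hy P) :=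
  (VietorisTop tX).induced Subtype.val

def Hy.mk (P : Set X → Prop) (F : Set X) (h : P F) : Hy P := ⟨F, h⟩

@[simp] theorem Hy.mk_val (P : Set X → Prop) (F : Set X) (h : P F) : (Hy.mk P F h).1 = F := rfl

variable {P : Set X → Prop}

theorem visOpen_sub {U : Set X} (hU : IsOpen U) (hne : U.Nonempty) :
    IsOpen[VietorisTop tX] {F : Set X | F ⊆ U} :=
  TopologicalSpace.isOpen_generateFrom_of_mem (Or.inl ⟨U, hU, hne, rfl⟩)

theorem visOpen_meet {U : Set X} (hU : IsOpen U) (hne : U.Nonempty) :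
    IsOpen[VietorisTop tX] {F : Set X | (F ∩ U).Nonempty} :=
  TopologicalSpace.isOpen_generateFrom_of_mem (Or.inr ⟨U, hU, hne, rfl⟩)

theorem hopen_of {s : Set (Set X)} (hs : IsOpen[VietorisTop tX] s) :
    IsOpen {G : Hy P | G.1 ∈ s} :=
  ⟨s, hs, rfl⟩

theorem hcont_of {Y : Type*} [tY : TopologicalSpace Y] (f : Y → Hy P)
    (h : ∀ s, IsOpen[VietorisTop tX] s → IsOpen {y | (f y).1 ∈ s}) : Continuous f := by
  rw [continuous_def]
  intro s hs
  obtain ⟨t, ht, rfl⟩ := hs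
  exact h t ht

theorem hopen_sub (hne₀ : ∀ F, P F → F.Nonempty) {U : Set X} (hU : IsOpen U) :
    IsOpen {G : Hy P | G.1 ⊆ U} := by
  rcases U.eq_empty_or_nonempty with rfl | hne
  · have : {G : Hy P | G.1 ⊆ ∅} = ∅ := by
      ext G
      simp only [mem_setOf_eq, mem_empty_iff_false, iff_false, subset_empty_iff]
      exact fun h => (hne₀ _ G.2).ne_empty h
    rw [this]; exact isOpen_empty
  · exact hopen_of (visOpen_sub hU hne)

theorem hopen_meet {U : Set X} (hU : IsOpen U) :
    IsOpen {G : Hy P | (G.1 ∩ U).Nonempty} := by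
  rcases U.eq_empty_or_nonempty with rfl | hne
  · have : {G : Hy P | (G.1 ∩ ∅).Nonempty} = ∅ := by
      ext G
      simp [Set.not_nonempty_empty]
    rw [this]; exact isOpen_empty
  · exact hopen_of (visOpen_meet hU hne)

theorem hclosed_sub {C : Set X} (hC : IsClosed C) :
    IsClosed {G : Hy P | G.1 ⊆ C} := by
  rw [← isOpen_compl_iff]
  have : {G : Hy P | G.1 ⊆ C}ᶜ = {G : Hy P | (G.1 ∩ Cᶜ).Nonempty} := by
    ext G
    simp only [mem_compl_iff, mem_setOf_eq, not_subset]
    constructor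
    · rintro ⟨x, hx, hxC⟩; exact ⟨x, hx, hxC⟩
    · rintro ⟨x, hx, hxC⟩; exact ⟨x, hx, hxC⟩
  rw [this]
  exact hopen_meet hC.isOpen_compl

theorem hclosed_meet {C : Set X} (hC : IsClosed C) (hne₀ : ∀ F, P F → F.Nonempty) :
    IsClosed {G : Hy P | (G.1 ∩ C).Nonempty} := by
  rw [← isOpen_compl_iff]
  have : {G : Hy P | (G.1 ∩ C).Nonempty}ᶜ = {G : Hy P | G.1 ⊆ Cᶜ} := by
    ext G
    simp only [mem_compl_iff, mem_setOf_eq, not_nonempty_iff_eq_empty,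
      ← disjoint_iff_inter_eq_empty, subset_compl_iff_disjoint_right]
  rw [this]
  exact hopen_sub hne₀ hC.isOpen_compl

theorem hclopen_sub (hne₀ : ∀ F, P F → F.Nonempty) {C : Set X} (hC : IsClopen C) :
    IsClopen {G : Hy P | G.1 ⊆ C} :=
  ⟨hclosed_sub hC.isClosed, hopen_sub hne₀ hC.isOpen⟩

theorem hclopen_meet (hne₀ : ∀ F, P F → F.Nonempty) {C : Set X} (hC : IsClopen C) :
    IsClopen {G : Hy P | (G.1 ∩ C).Nonempty} :=
  ⟨hclosed_meet hC.isClosed hne₀, hopen_meet hC.isOpen⟩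

end HypAux
namespace HypAux

variable {X : Type*} [tX : TopologicalSpace X] {P : Set X → Prop}

theorem hcont_mk {Y : Type*} [tY : TopologicalSpace Y] (f : Y → Set X) (hPf : ∀ y, P (f y))
    (hf : Continuous[tY, VietorisTop tX] f) :
    Continuous fun y => Hy.mk P (f y) (hPf y) := by
  rw [continuous_def]
  intro s hs
  obtain ⟨t, ht, rfl⟩ := hs
  exact @Continuous.isOpen_preimage Y (Set X) tY (VietorisTop tX) f hf t ht

theorem vcont_union_singleton (A : Set X) :
    Continuous[tX, VietorisTop tX] (fun x => A ∪ {x}) := by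
  show Continuous[tX, TopologicalSpace.generateFrom _] _
  rw [continuous_generateFrom_iff]
  rintro s (⟨U, hU, hUne, rfl⟩ | ⟨U, hU, hUne, rfl⟩)
  · by_cases hA : A ⊆ U
    · have : (fun x => A ∪ {x}) ⁻¹' {F | F ⊆ U} = U := by
        ext x
        simp [union_singleton, insert_subset_iff, hA]
      rw [this]; exact hU
    · have : (fun x => A ∪ {x}) ⁻¹' {F | F ⊆ U} = ∅ := by
        ext x
        simp only [mem_preimage, mem_setOf_eq, union_subset_iff, mem_empty_iff_false, iff_false,
          not_and]
        exact fun h => absurd h hA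
      rw [this]; exact isOpen_empty
  · by_cases hA : (A ∩ U).Nonempty
    · have : (fun x => A ∪ {x}) ⁻¹' {F | (F ∩ U).Nonempty} = univ := by
        ext x
        simp only [mem_preimage, mem_setOf_eq, mem_univ, iff_true]
        exact hA.mono (inter_subset_inter_left U subset_union_left)
      rw [this]; exact isOpen_univ
    · have : (fun x => A ∪ {x}) ⁻¹' {F | (F ∩ U).Nonempty} = U := by
        ext x
        simp only [mem_preimage, mem_setOf_eq, union_inter_distrib_right]
        rw [not_nonempty_iff_eq_empty] at hA
        rw [hA]
        simp [singleton_inter_nonempty]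
      rw [this]; exact hU

theorem vcont_range (n : ℕ) :
    Continuous[Pi.topologicalSpace, VietorisTop tX] (fun x : Fin n → X => Set.range x) := by
  show Continuous[_, TopologicalSpace.generateFrom _] _
  rw [continuous_generateFrom_iff]
  rintro s (⟨U, hU, hUne, rfl⟩ | ⟨U, hU, hUne, rfl⟩)
  · have : (fun x : Fin n → X => Set.range x) ⁻¹' {F | F ⊆ U} = Set.pi univ (fun _ => U) := by
      ext x
      simp [Set.range_subset_iff, Set.mem_pi]
    rw [this]
    exact isOpen_set_pi finite_univ (fun _ _ => hU)
  · have : (fun x : Fin n → X => Set.range x) ⁻¹' {F | (F ∩ U).Nonempty} =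
        ⋃ i, (fun x : Fin n → X => x i) ⁻¹' U := by
      ext x
      constructor
      · rintro ⟨y, ⟨i, rfl⟩, hyU⟩
        exact mem_iUnion.2 ⟨i, hyU⟩
      · intro hx
        obtain ⟨i, hi⟩ := mem_iUnion.1 hx
        exact ⟨x i, ⟨i, rfl⟩, hi⟩
    rw [this]
    exact isOpen_iUnion fun i => hU.preimage (continuous_apply i)

end HypAux
namespace HypAux

variable {X : Type*} [tX : TopologicalSpace X] {P : Set X → Prop}

/-- The Vietoris subbasis. -/
def VSub (tX : TopologicalSpace X) : Set (Set (Set X)) :=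
  {S : Set (Set X) | ∃ U : Set X, IsOpen[tX] U ∧ U.Nonempty ∧ S = {F : Set X | F ⊆ U}} ∪
  {S : Set (Set X) | ∃ U : Set X, IsOpen[tX] U ∧ U.Nonempty ∧ S = {F : Set X | (F ∩ U).Nonempty}}

theorem vietoris_eq : VietorisTop tX = TopologicalSpace.generateFrom (VSub tX) := rfl

theorem basis_aux (F₀ : Set X) (T : Set (Set (Set X))) (hT : T.Finite) :
    T ⊆ {s | F₀ ∈ s ∧ s ∈ VSub tX} →
    ∃ (U : Set X) (W : Finset (Set X)), IsOpen U ∧ F₀ ⊆ U ∧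
      (∀ w ∈ W, IsOpen w ∧ (F₀ ∩ w).Nonempty) ∧
      {H : Set X | H ⊆ U ∧ ∀ w ∈ W, (H ∩ w).Nonempty} ⊆ ⋂₀ T := by
  classical
  refine Set.Finite.induction_on T hT ?_ ?_
  · intro _
    exact ⟨univ, ∅, isOpen_univ, subset_univ _, by simp, by simp⟩
  · intro s T' _ hT'fin IH hsub
    obtain ⟨U, W, hU, hFU, hW, hsubset⟩ := IH (fun t ht => hsub (mem_insert_of_mem _ ht))
    obtain ⟨hFs, hsSv⟩ := hsub (mem_insert _ _)
    rcases hsSv with ⟨U', hU', hU'ne, rfl⟩ | ⟨U', hU', hU'ne, rfl⟩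
    · refine ⟨U ∩ U', W, hU.inter hU', subset_inter hFU hFs, hW, ?_⟩
      rintro H ⟨hHU, hHW⟩
      rw [sInter_insert]
      exact ⟨hHU.trans inter_subset_right, hsubset ⟨hHU.trans inter_subset_left, hHW⟩⟩
    · refine ⟨U, insert U' W, hU, hFU, ?_, ?_⟩
      · intro w hw
        rcases Finset.mem_insert.1 hw with rfl | hw
        · exact ⟨hU', hFs⟩
        · exact hW w hw
      · rintro H ⟨hHU, hHW⟩
        rw [sInter_insert]
        exact ⟨hHW U' (Finset.mem_insert_self _ _),
          hsubset ⟨hHU, fun w hw => hHW w (Finset.mem_insert_of_mem hw)⟩⟩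

theorem hy_mem_nhds {F : Hy P} {𝒰 : Set (Hy P)} (h𝒰 : 𝒰 ∈ nhds F) :
    ∃ (U : Set X) (W : Finset (Set X)), IsOpen U ∧ F.1 ⊆ U ∧
      (∀ w ∈ W, IsOpen w ∧ (F.1 ∩ w).Nonempty) ∧
      {G : Hy P | G.1 ⊆ U ∧ ∀ w ∈ W, (G.1 ∩ w).Nonempty} ⊆ 𝒰 := by
  have h𝒰' : 𝒰 ∈ @nhds (Hy P) ((VietorisTop tX).induced Subtype.val) F := h𝒰
  rw [@nhds_induced (Set X) (Hy P) (VietorisTop tX) Subtype.val F] at h𝒰'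
  obtain ⟨𝒲, h𝒲, hsub⟩ := Filter.mem_comap.1 h𝒰'
  have h3 : 𝒲 ∈ Filter.generate {s : Set (Set X) | F.1 ∈ s ∧ s ∈ VSub tX} := by
    rw [Filter.generate_eq_biInf, ← TopologicalSpace.nhds_generateFrom]
    exact h𝒲
  obtain ⟨T, hTsub, hTfin, hTsubset⟩ := Filter.mem_generate_iff.1 h3
  obtain ⟨U, W, hU, hFU, hW, hsubset⟩ := basis_aux F.1 T hTfin hTsub
  exact ⟨U, W, hU, hFU, hW, fun G hG => hsub (hTsubset (hsubset hG))⟩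

/-- `V` is an intersection of clopen sets. -/
def CSet (V : Set X) : Prop :=
  ∃ C : Set (Set X), (∀ c ∈ C, IsClopen c) ∧ V = ⋂₀ C

theorem CSet.empty : CSet (∅ : Set X) :=
  ⟨{∅}, by simp [isClopen_empty], by simp⟩

theorem CSet.union {A B : Set X} (hA : CSet A) (hB : CSet B) : CSet (A ∪ B) := by
  classical
  obtain ⟨𝒜, h𝒜, rfl⟩ := hA
  obtain ⟨ℬ, hℬ, rfl⟩ := hB
  refine ⟨{s | ∃ a ∈ 𝒜, ∃ b ∈ ℬ, s = a ∪ b}, ?_, ?_⟩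
  · rintro c ⟨a, ha, b, hb, rfl⟩
    exact (h𝒜 a ha).union (hℬ b hb)
  · ext x
    constructor
    · rintro (hx | hx) s ⟨a, ha, b, hb, rfl⟩
      · exact Or.inl (hx a ha)
      · exact Or.inr (hx b hb)
    · intro hx
      by_cases hA' : x ∈ ⋂₀ 𝒜
      · exact Or.inl hA'
      · right
        obtain ⟨a₀, ha₀, hxa₀⟩ : ∃ a₀ ∈ 𝒜, x ∉ a₀ := by
          by_contra h
          push_neg at h
          exact hA' (fun a ha => h a ha)
        intro b hb
        rcases hx (a₀ ∪ b) ⟨a₀, ha₀, b, hb, rfl⟩ with h | h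
        · exact absurd h hxa₀
        · exact h

theorem CSet.biUnion {ι : Type*} (t : Finset ι) (f : ι → Set X)
    (hf : ∀ i ∈ t, CSet (f i)) : CSet (⋃ i ∈ t, f i) := by
  classical
  induction t using Finset.induction_on with
  | empty => simpa using CSet.empty
  | insert a t' hnotmem IH =>
    rw [Finset.set_biUnion_insert]
    exact (hf a (Finset.mem_insert_self _ _)).union
      (IH fun i hi => hf i (Finset.mem_insert_of_mem hi))

theorem clopen_val_preimage {Y : Type*} [TopologicalSpace Y] {C : Set Y} :
    IsClopen {y : (univ : Set Y) | (y : Y) ∈ C} ↔ IsClopen C := by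
  constructor
  · intro h
    have : C = (fun x : Y => (⟨x, mem_univ x⟩ : (univ : Set Y))) ⁻¹' {y : (univ : Set Y) | (y : Y) ∈ C} := rfl
    rw [this]
    exact h.preimage (Continuous.subtype_mk continuous_id _)
  · intro h
    exact h.preimage continuous_subtype_val

theorem azd_sep [T2Space X] (hazd : IsAZD X) {x y : X} (hxy : x ≠ y) :
    ∃ C : Set X, IsClopen C ∧ x ∈ C ∧ y ∉ C := by
  obtain ⟨V, hV, hVsub, C, hC, rfl⟩ := hazd x {y}ᶜ (compl_singleton_mem_nhds hxy)
  have hx : x ∈ ⋂₀ C := mem_of_mem_nhds hV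
  have hy : y ∉ ⋂₀ C := fun h => (hVsub h) rfl
  obtain ⟨c, hc, hyc⟩ : ∃ c ∈ C, y ∉ c := by
    by_contra h
    push_neg at h
    exact hy (fun c hc => h c hc)
  exact ⟨c, hC c hc, hx c hc, hyc⟩

theorem subsingleton_of_nocl [T2Space X] (hazd : IsAZD X)
    (h : ∀ C : Set X, C.Nonempty → C ≠ univ → ¬IsClopen C) : Subsingleton X := by
  constructor
  intro a b
  by_contra hab
  obtain ⟨C, hC, haC, hbC⟩ := azd_sep hazd hab
  exact h C ⟨a, haC⟩ (fun he => hbC (he ▸ mem_univ b)) hC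

def GoodO (O : Set X) : Prop :=
  IsOpen O ∧ ∀ C : Set X, C ⊆ O → C.Nonempty → C ≠ univ → ¬IsClopen C

theorem exists_goodO (hcoh : Cohesive X) (x : X) : ∃ O : Set X, x ∈ O ∧ GoodO O := by
  obtain ⟨U, hU, hprop⟩ := hcoh x
  refine ⟨interior U, mem_interior_iff_mem_nhds.2 hU, isOpen_interior, ?_⟩
  intro C hCsub hCne hCuniv hCcl
  exact hprop univ rfl C (hCsub.trans interior_subset) (subset_univ C) hCne hCuniv
    (clopen_val_preimage.2 hCcl)

theorem hy_subsingleton (hne₀ : ∀ F, P F → F.Nonempty) (h : Subsingleton X) :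
    Subsingleton (Hy P) := by
  constructor
  intro G H
  have key : ∀ (A : Set X), A.Nonempty → A = univ := by
    rintro A ⟨a, ha⟩
    exact eq_univ_of_forall (fun z => (Subsingleton.elim z a) ▸ ha)
  exact Subtype.ext ((key _ (hne₀ _ G.2)).trans (key _ (hne₀ _ H.2)).symm)

theorem cohesive_of_clopen {Y : Type*} [TopologicalSpace Y]
    (h : ∀ p : Y, ∃ 𝒰 ∈ nhds p, ∀ 𝒞 : Set Y, 𝒞 ⊆ 𝒰 → 𝒞.Nonempty → 𝒞 ≠ univ → ¬IsClopen 𝒞) :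
    Cohesive Y := by
  intro p
  obtain ⟨𝒰, h𝒰, hp⟩ := h p
  refine ⟨𝒰, h𝒰, ?_⟩
  rintro A hA 𝒞 h1 h2 h3 h4 hcl
  rw [mem_singleton_iff] at hA
  subst hA
  exact hp 𝒞 h1 h3 h4 (clopen_val_preimage.1 hcl)

end HypAux
namespace HypAux

variable {X : Type*} [tX : TopologicalSpace X] {P : Set X → Prop}

theorem hy_isAZD (hne₀ : ∀ F, P F → F.Nonempty) (hcpt : ∀ F, P F → IsCompact F)
    (hazd : IsAZD X) : IsAZD (Hy P) := by
  classical
  intro F 𝒰 h𝒰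
  obtain ⟨U, W, hU, hFU, hW, hsub⟩ := hy_mem_nhds h𝒰
  have hXne : Nonempty X := ⟨(hne₀ _ F.2).choose⟩
  -- C-set neighborhoods around points of F
  have hpt : ∀ x ∈ F.1, ∃ V : Set X, V ∈ nhds x ∧ V ⊆ U ∧ CSet V := by
    intro x hx
    obtain ⟨V, h1, h2, C, hC, hVeq⟩ := hazd x U (hU.mem_nhds (hFU hx))
    exact ⟨V, h1, h2, C, hC, hVeq⟩
  choose! V hVmem hVsub hVC using hpt
  have hcov : F.1 ⊆ ⋃ x : F.1, interior (V x.1) := fun x hx =>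
    mem_iUnion.2 ⟨⟨x, hx⟩, mem_interior_iff_mem_nhds.2 (hVmem x hx)⟩
  obtain ⟨t, ht⟩ := (hcpt _ F.2).elim_finite_subcover
    (fun x : F.1 => interior (V x.1)) (fun _ => isOpen_interior) hcov
  -- C-set neighborhoods around witnesses for the W-conditions
  have hw' : ∀ w ∈ W, ∃ z, z ∈ F.1 ∩ w := fun w hw => (hW w hw).2
  choose! y hy using hw'
  have hyV : ∀ w ∈ W, ∃ V' : Set X, V' ∈ nhds (y w) ∧ V' ⊆ U ∩ w ∧ CSet V' := by
    intro w hw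
    obtain ⟨V', h1, h2, C, hC, hVeq⟩ := hazd (y w) (U ∩ w)
      ((hU.inter (hW w hw).1).mem_nhds ⟨hFU (hy w hw).1, (hy w hw).2⟩)
    exact ⟨V', h1, h2, C, hC, hVeq⟩
  choose! V' hV'mem hV'sub hV'C using hyV
  set Vbig : Set X := (⋃ x ∈ t, V x.1) ∪ (⋃ w ∈ W, V' w) with hVbigdef
  have hVbigC : CSet Vbig :=
    (CSet.biUnion t _ (fun x _ => hVC x.1 x.2)).union
      (CSet.biUnion W _ (fun w hw => hV'C w hw))
  have hVbigU : Vbig ⊆ U :=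
    union_subset (iUnion₂_subset fun x _ => hVsub x.1 x.2)
      (iUnion₂_subset fun w hw => (hV'sub w hw).trans inter_subset_left)
  set 𝒱 : Set (Hy P) := {G | G.1 ⊆ Vbig ∧ ∀ w ∈ W, (G.1 ∩ V' w).Nonempty} with h𝒱def
  -- 𝒱 is a neighborhood of F
  have h𝒱nhds : 𝒱 ∈ nhds F := by
    set Wo : Set X := ⋃ x ∈ t, interior (V x.1) with hWodef
    have hWoopen : IsOpen Wo := isOpen_biUnion fun _ _ => isOpen_interior
    set O : Set (Hy P) :=
      {G | G.1 ⊆ Wo} ∩ ⋂ w ∈ W, {G : Hy P | (G.1 ∩ interior (V' w)).Nonempty} with hOdef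
    have hOopen : IsOpen O :=
      (hopen_sub hne₀ hWoopen).inter
        (isOpen_biInter_finset fun w _ => hopen_meet isOpen_interior)
    have hFO : F ∈ O := by
      refine ⟨ht, ?_⟩
      simp only [mem_iInter]
      intro w hw
      exact ⟨y w, (hy w hw).1, mem_interior_iff_mem_nhds.2 (hV'mem w hw)⟩
    have hO𝒱 : O ⊆ 𝒱 := by
      rintro G ⟨h1, h2⟩
      simp only [mem_iInter] at h2
      refine ⟨h1.trans ?_, fun w hw => (h2 w hw).mono (inter_subset_inter_right _ interior_subset)⟩
      exact (iUnion₂_mono fun x _ => interior_subset).trans subset_union_left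
    exact Filter.mem_of_superset (hOopen.mem_nhds hFO) hO𝒱
  -- 𝒱 is contained in 𝒰
  have h𝒱𝒰 : 𝒱 ⊆ 𝒰 := by
    rintro G ⟨h1, h2⟩
    refine hsub ⟨h1.trans hVbigU, fun w hw => ?_⟩
    exact (h2 w hw).mono (inter_subset_inter_right _ ((hV'sub w hw).trans inter_subset_right))
  -- 𝒱 is an intersection of clopen subsets
  obtain ⟨𝒟₀, h𝒟₀, h𝒟₀eq⟩ := hVbigC
  have hCw : ∀ w ∈ W, ∃ Cw : Set (Set X), (∀ c ∈ Cw, IsClopen c) ∧ V' w = ⋂₀ Cw :=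
    fun w hw => hV'C w hw
  choose! Cw hCwclopen hCweq using hCw
  set Dw : Set X → Set (Set X) := fun w => {d | ∃ s : Set (Set X), s ⊆ Cw w ∧ s.Finite ∧ d = ⋂₀ s}
    with hDwdef
  set CC : Set (Set (Hy P)) :=
    {c | ∃ d ∈ 𝒟₀, c = {G : Hy P | G.1 ⊆ d}} ∪
    {c | ∃ w ∈ W, ∃ d ∈ Dw w, c = {G : Hy P | (G.1 ∩ d).Nonempty}} with hCCdef
  have hCCclopen : ∀ c ∈ CC, IsClopen c := by
    rintro c (⟨d, hd, rfl⟩ | ⟨w, hw, d, ⟨s, hs1, hs2, rfl⟩, rfl⟩)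
    · exact hclopen_sub hne₀ (h𝒟₀ d hd)
    · have : IsClopen (⋂₀ s) := by
        rw [sInter_eq_biInter]
        exact hs2.isClopen_biInter fun c hc => hCwclopen w hw c (hs1 hc)
      exact hclopen_meet hne₀ this
  have h𝒱eq : 𝒱 = ⋂₀ CC := by
    ext G
    constructor
    · rintro ⟨h1, h2⟩ c hc
      rcases hc with ⟨d, hd, rfl⟩ | ⟨w, hw, d, ⟨s, hs1, hs2, rfl⟩, rfl⟩
      · exact h1.trans (h𝒟₀eq ▸ sInter_subset_of_mem hd)
      · refine (h2 w hw).mono (inter_subset_inter_right _ ?_)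
        rw [hCweq w hw]
        exact sInter_subset_sInter hs1
    · intro hG
      constructor
      · rw [h𝒟₀eq]
        exact subset_sInter fun d hd => hG _ (Or.inl ⟨d, hd, rfl⟩)
      · intro w hw
        by_contra hcon
        rw [not_nonempty_iff_eq_empty] at hcon
        have hcov2 : G.1 ⊆ ⋃ c : (Cw w), (c.1)ᶜ := by
          intro x hx
          have hxV : x ∉ V' w := fun hxV => by
            have : x ∈ G.1 ∩ V' w := ⟨hx, hxV⟩
            rw [hcon] at this
            exact this
          rw [hCweq w hw] at hxV
          obtain ⟨c, hc, hxc⟩ : ∃ c ∈ Cw w, x ∉ c := by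
            by_contra hall
            push_neg at hall
            exact hxV fun c hc => hall c hc
          exact mem_iUnion.2 ⟨⟨c, hc⟩, hxc⟩
        obtain ⟨u, hu⟩ := (hcpt _ G.2).elim_finite_subcover (fun c : (Cw w) => (c.1)ᶜ)
          (fun c => (hCwclopen w hw c.1 c.2).1.isOpen_compl) hcov2
        have hd : (⋂₀ (Subtype.val '' (u : Set (Cw w)))) ∈ Dw w :=
          ⟨Subtype.val '' (u : Set (Cw w)), by rintro d ⟨c, _, rfl⟩; exact c.2,
            (u.finite_toSet).image _, rfl⟩
        have := hG _ (Or.inr ⟨w, hw, _, hd, rfl⟩)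
        obtain ⟨x, hxG, hxd⟩ := this
        obtain ⟨c, hcu, hxc⟩ : ∃ c ∈ u, x ∈ (c.1)ᶜ := by
          have := hu hxG
          simpa using this
        exact hxc (hxd c.1 ⟨c, hcu, rfl⟩)
  exact ⟨𝒱, h𝒱nhds, h𝒱𝒰, CC, hCCclopen, h𝒱eq⟩

end HypAux
namespace HypAux

theorem azd_totallySeparated {X : Type*} [TopologicalSpace X] [T2Space X] (hazd : IsAZD X) :
    TotallySeparatedSpace X := by
  constructor
  intro x _ y _ hxy
  obtain ⟨C, hC, hxC, hyC⟩ := azd_sep hazd hxy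
  exact ⟨C, Cᶜ, hC.2, hC.1.isOpen_compl, hxC, hyC, by simp, disjoint_compl_right⟩

theorem disjointify {Y : Type*} [TopologicalSpace Y] {ι : Type*} (t : Finset ι)
    (c : ι → Set Y) (hc : ∀ i ∈ t, IsClopen (c i)) :
    ∃ s : Finset (Set Y),
      (∀ d ∈ s, IsClopen d ∧ d.Nonempty ∧ ∃ i ∈ t, d ⊆ c i) ∧
      (∀ d ∈ s, ∀ d' ∈ s, d ≠ d' → Disjoint d d') ∧
      ⋃₀ ↑s = ⋃ i ∈ t, c i := by
  classical
  induction t using Finset.induction_on with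
  | empty => exact ⟨∅, by simp, by simp, by simp⟩
  | insert a t' hnotmem IH =>
    obtain ⟨s, hs1, hs2, hs3⟩ := IH (fun i hi => hc i (Finset.mem_insert_of_mem hi))
    set d₀ : Set Y := c a \ ⋃ i ∈ t', c i with hd₀def
    by_cases hd₀ : d₀ = ∅
    · refine ⟨s, ?_, hs2, ?_⟩
      · intro d hd
        obtain ⟨h1, h2, i, hi, h3⟩ := hs1 d hd
        exact ⟨h1, h2, i, Finset.mem_insert_of_mem hi, h3⟩
      · rw [hs3, Finset.set_biUnion_insert]
        rw [diff_eq_empty] at hd₀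
        exact (union_eq_self_of_subset_left hd₀).symm
    · refine ⟨insert d₀ s, ?_, ?_, ?_⟩
      · intro d hd
        rcases Finset.mem_insert.1 hd with rfl | hd
        · exact ⟨(hc a (Finset.mem_insert_self _ _)).diff
            (isClopen_biUnion_finset fun i hi => hc i (Finset.mem_insert_of_mem hi)),
            nonempty_iff_ne_empty.2 hd₀, a, Finset.mem_insert_self _ _, diff_subset⟩
        · obtain ⟨h1, h2, i, hi, h3⟩ := hs1 d hd
          exact ⟨h1, h2, i, Finset.mem_insert_of_mem hi, h3⟩
      · have hdisj : ∀ d ∈ s, Disjoint d₀ d := by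
          intro d hd
          obtain ⟨_, _, i, hi, h3⟩ := hs1 d hd
          refine Set.disjoint_left.2 fun x hx hxd => ?_
          exact hx.2 (mem_biUnion hi (h3 hxd))
        intro d hd d' hd' hne
        rcases Finset.mem_insert.1 hd with rfl | hd <;> rcases Finset.mem_insert.1 hd' with h' | hd'
        · exact absurd h'.symm hne
        · exact hdisj d' hd'
        · subst h'; exact (hdisj d hd).symm
        · exact hs2 d hd d' hd' hne
      · rw [Finset.coe_insert, sUnion_insert, hs3, Finset.set_biUnion_insert]
        exact diff_union_self
  
theorem exists_partition {X : Type*} [TopologicalSpace X] [T2Space X]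
    (hTS : TotallySeparatedSpace X)
    {F : Set X} (hF : IsCompact F) (hFne : F.Nonempty) (O : X → Set X)
    (hO : ∀ x ∈ F, IsOpen (O x) ∧ x ∈ O x) :
    ∃ (m : ℕ) (K : Fin m → Set X) (z : Fin m → X), 0 < m ∧
      (∀ i, (K i).Nonempty ∧ IsCompact (K i)) ∧
      (∀ i j, i ≠ j → Disjoint (K i) (K j)) ∧
      (⋃ i, K i) = F ∧ (∀ i, z i ∈ F ∧ K i ⊆ O (z i)) := by
  classical
  haveI : CompactSpace F := isCompact_iff_compactSpace.1 hF
  haveI := hTS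
  haveI : TotallyDisconnectedSpace X := inferInstance
  haveI : TotallyDisconnectedSpace F := Subtype.totallyDisconnectedSpace
  have hcex : ∀ p : F, ∃ cc : Set F, IsClopen cc ∧ p ∈ cc ∧ cc ⊆ Subtype.val ⁻¹' (O p.1) := by
    intro p
    have hnp : Subtype.val ⁻¹' (O p.1) ∈ nhds p :=
      (((hO p.1 p.2).1).preimage continuous_subtype_val).mem_nhds ((hO p.1 p.2).2)
    obtain ⟨cc, hcc, hpc, hsub⟩ := isTopologicalBasis_isClopen.mem_nhds_iff.1 hnp
    exact ⟨cc, hcc, hpc, hsub⟩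
  choose cc hccclopen hccmem hccsub using hcex
  obtain ⟨t, ht⟩ := isCompact_univ.elim_finite_subcover cc (fun p => (hccclopen p).2)
    (fun p _ => mem_iUnion.2 ⟨p, hccmem p⟩)
  obtain ⟨s, hs1, hs2, hs3⟩ := disjointify t cc (fun i _ => hccclopen i)
  have hsne : s.Nonempty := by
    obtain ⟨x, hx⟩ := hFne
    have : (⟨x, hx⟩ : F) ∈ ⋃₀ ↑s := by
      rw [hs3]; exact ht (mem_univ _)
    obtain ⟨d, hd, _⟩ := this
    exact ⟨d, hd⟩
  set m := s.card with hmdef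
  have hm : 0 < m := Finset.card_pos.2 hsne
  set e := s.equivFin with hedef
  have hz : ∀ i : Fin m, ∃ p ∈ t, ((e.symm i : s) : Set F) ⊆ cc p :=
    fun i => (hs1 _ (e.symm i).2).2.2
  choose zp hzp1 hzp2 using hz
  refine ⟨m, fun i => Subtype.val '' ((e.symm i : s) : Set F),
    fun i => (zp i).1, hm, ?_, ?_, ?_, ?_⟩
  · intro i
    obtain ⟨h1, h2, _⟩ := hs1 _ (e.symm i).2
    exact ⟨h2.image _, (h1.1.isCompact).image continuous_subtype_val⟩
  · intro i j hij
    have hne : ((e.symm i : s) : Set F) ≠ ((e.symm j : s) : Set F) := by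
      intro h
      apply hij
      have : (e.symm i : s) = (e.symm j : s) := Subtype.ext h
      simpa using congrArg e this
    exact disjoint_image_of_injective Subtype.val_injective
      (hs2 _ (e.symm i).2 _ (e.symm j).2 hne)
  · apply Subset.antisymm
    · exact iUnion_subset fun i => by
        rintro x ⟨p, _, rfl⟩; exact p.2
    · intro x hx
      have : (⟨x, hx⟩ : F) ∈ ⋃₀ ↑s := by
        rw [hs3]; exact ht (mem_univ _)
      obtain ⟨d, hd, hxd⟩ := this
      refine mem_iUnion.2 ⟨e ⟨d, hd⟩, ⟨x, hx⟩, ?_, rfl⟩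
      simpa using hxd
  · intro i
    refine ⟨(zp i).2, ?_⟩
    rintro x ⟨p, hp, rfl⟩
    exact (hccsub (zp i)) (hzp2 i hp)

theorem exists_disjoint_opens {X : Type*} [MetricSpace X] {m : ℕ}
    (K : Fin m → Set X) (O : Fin m → Set X)
    (hK : ∀ i, (K i).Nonempty ∧ IsCompact (K i)) (hdisj : ∀ i j, i ≠ j → Disjoint (K i) (K j))
    (hO : ∀ i, IsOpen (O i)) (hKO : ∀ i, K i ⊆ O i) (hm : 0 < m) :
    ∃ U : Fin m → Set X, (∀ i, IsOpen (U i) ∧ (U i).Nonempty ∧ K i ⊆ U i ∧ U i ⊆ O i) ∧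
      ∀ i j, i ≠ j → Disjoint (closure (U i)) (closure (U j)) := by
  have h1 : ∀ i, ∃ δ > 0, Metric.thickening δ (K i) ⊆ O i := fun i =>
    (hK i).2.exists_thickening_subset_open (hO i) (hKO i)
  choose δ1 hδ1pos hδ1 using h1
  have h2 : ∀ i j, ∃ δ > 0, i ≠ j →
      Disjoint (Metric.cthickening δ (K i)) (Metric.cthickening δ (K j)) := by
    intro i j
    by_cases hij : i = j
    · exact ⟨1, one_pos, fun h => absurd hij h⟩
    · obtain ⟨δ, hδ, hd⟩ := (hdisj i j hij).exists_cthickenings (hK i).2 (hK j).2.isClosed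
      exact ⟨δ, hδ, fun _ => hd⟩
  choose δ2 hδ2pos hδ2 using h2
  haveI : Nonempty (Fin m) := ⟨⟨0, hm⟩⟩
  set δ : ℝ := min (Finset.univ.inf' Finset.univ_nonempty δ1)
    (Finset.univ.inf' Finset.univ_nonempty fun i => Finset.univ.inf' Finset.univ_nonempty (δ2 i))
    with hδdef
  have hδpos : 0 < δ := by
    rw [lt_min_iff]
    constructor
    · rw [Finset.lt_inf'_iff]
      exact fun i _ => hδ1pos i
    · rw [Finset.lt_inf'_iff]
      intro i _
      rw [Finset.lt_inf'_iff]
      exact fun j _ => hδ2pos i j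
  have hδle1 : ∀ i, δ ≤ δ1 i := fun i =>
    (min_le_left _ _).trans (Finset.inf'_le _ (Finset.mem_univ i))
  have hδle2 : ∀ i j, δ ≤ δ2 i j := fun i j =>
    (min_le_right _ _).trans ((Finset.inf'_le _ (Finset.mem_univ i)).trans
      (Finset.inf'_le _ (Finset.mem_univ j)))
  refine ⟨fun i => Metric.thickening δ (K i), fun i => ⟨Metric.isOpen_thickening,
    (hK i).1.mono (Metric.self_subset_thickening hδpos _),
    Metric.self_subset_thickening hδpos _, (Metric.thickening_mono (hδle1 i) _).trans (hδ1 i)⟩,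
    fun i j hij => ?_⟩
  have hci : closure (Metric.thickening δ (K i)) ⊆ Metric.cthickening (δ2 i j) (K i) :=
    (Metric.closure_thickening_subset_cthickening _ _).trans
      (Metric.cthickening_mono (hδle2 i j) _)
  have hcj : closure (Metric.thickening δ (K j)) ⊆ Metric.cthickening (δ2 i j) (K j) :=
    (Metric.closure_thickening_subset_cthickening _ _).trans
      (Metric.cthickening_mono (hδle2 i j) _)
  exact (hδ2 i j hij).mono hci hcj

theorem exists_good_cover {X : Type*} [MetricSpace X] (hcoh : Cohesive X) (hazd : IsAZD X)
    {F : Set X} (hF : IsCompact F) (hFne : F.Nonempty) :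
    ∃ (m : ℕ) (U O : Fin m → Set X), 0 < m ∧
      (∀ i, IsOpen (U i) ∧ (U i).Nonempty ∧ U i ⊆ O i ∧ GoodO (O i)) ∧
      (∀ i j, i ≠ j → Disjoint (closure (U i)) (closure (U j))) ∧
      F ⊆ ⋃ i, U i ∧ ∀ i, (F ∩ U i).Nonempty := by
  choose O' hO'mem hO'good using exists_goodO hcoh
  have hTS := azd_totallySeparated hazd
  obtain ⟨m, K, z, hm, hKne, hKdisj, hKun, hKO⟩ := exists_partition hTS hF hFne O'
    (fun x _ => ⟨(hO'good x).1, hO'mem x⟩)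
  obtain ⟨U, hU, hUdisj⟩ := exists_disjoint_opens K (fun i => O' (z i)) hKne
    (fun i j hij => hKdisj i j hij) (fun i => (hO'good (z i)).1) (fun i => (hKO i).2) hm
  refine ⟨m, U, fun i => O' (z i), hm, fun i =>
    ⟨(hU i).1, (hU i).2.1, (hU i).2.2.2, hO'good (z i)⟩, hUdisj, ?_, ?_⟩
  · rw [← hKun]
    exact iUnion_mono fun i => (hU i).2.2.1
  · intro i
    refine ((hKne i).1.mono ?_)
    rw [← hKun]
    exact subset_inter (subset_iUnion K i) (hU i).2.2.1

end HypAux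
namespace HypAux

variable {X : Type*} [tX : TopologicalSpace X]

theorem hy_cohesive_union [TopologicalSpace.MetrizableSpace X] {P : Set X → Prop}
    (hne₀ : ∀ F, P F → F.Nonempty) (hcpt : ∀ F, P F → IsCompact F)
    (hins : ∀ F x, P F → P (F ∪ {x}))
    (hcoh : Cohesive X) (hazd : IsAZD X) : Cohesive (Hy P) := by
  letI mX : MetricSpace X := TopologicalSpace.metrizableSpaceMetric X
  apply cohesive_of_clopen
  intro F
  obtain ⟨m, U, O, hm, hUO, hUdisj, hFsub, hFmeet⟩ :=
    exists_good_cover hcoh hazd (hcpt _ F.2) (hne₀ _ F.2)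
  set 𝒰 : Set (Hy P) := {G | G.1 ⊆ ⋃ i, U i} ∩ ⋂ i, {G : Hy P | (G.1 ∩ U i).Nonempty}
    with h𝒰def
  have h𝒰open : IsOpen 𝒰 :=
    (hopen_sub hne₀ (isOpen_iUnion fun i => (hUO i).1)).inter
      (isOpen_iInter_of_finite fun i => hopen_meet (hUO i).1)
  have hF𝒰 : F ∈ 𝒰 := ⟨hFsub, mem_iInter.2 fun i => hFmeet i⟩
  refine ⟨𝒰, h𝒰open.mem_nhds hF𝒰, ?_⟩
  intro 𝒞 h𝒞𝒰 h𝒞ne h𝒞univ h𝒞cl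
  obtain ⟨G, hG⟩ := h𝒞ne
  set i₀ : Fin m := ⟨0, hm⟩
  have hGU : (G.1 ∩ U i₀).Nonempty := mem_iInter.1 (h𝒞𝒰 hG).2 i₀
  obtain ⟨x₀, hx₀G, hx₀U⟩ := hGU
  have hf : Continuous fun x : X => Hy.mk P (G.1 ∪ {x}) (hins _ x G.2) :=
    hcont_mk _ _ (vcont_union_singleton _)
  set D : Set X := (fun x : X => Hy.mk P (G.1 ∪ {x}) (hins _ x G.2)) ⁻¹' 𝒞 with hDdef
  have hDcl : IsClopen D := h𝒞cl.preimage hf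
  have hx₀D : x₀ ∈ D := by
    show Hy.mk P (G.1 ∪ {x₀}) _ ∈ 𝒞
    have heq : G.1 ∪ {x₀} = G.1 := union_eq_self_of_subset_right (singleton_subset_iff.2 hx₀G)
    have : Hy.mk P (G.1 ∪ {x₀}) (hins _ x₀ G.2) = G := Subtype.ext heq
    rw [this]
    exact hG
  have hDsub : D ⊆ ⋃ i, U i := fun x hx => (h𝒞𝒰 hx).1 (Or.inr rfl)
  set C₁ : Set X := D ∩ U i₀ with hC₁def
  have hC₁cl : IsClopen C₁ := by
    constructor
    · apply isClosed_of_closure_subset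
      intro q hq
      have hqD : q ∈ D := by
        have := (closure_mono inter_subset_left) hq
        rwa [hDcl.1.closure_eq] at this
      have hqcl : q ∈ closure (U i₀) := (closure_mono inter_subset_right) hq
      obtain ⟨j, hj⟩ := mem_iUnion.1 (hDsub hqD)
      by_cases hji : j = i₀
      · exact ⟨hqD, hji ▸ hj⟩
      · exact absurd hqcl (fun hc => (hUdisj j i₀ hji).ne_of_mem (subset_closure hj) hc rfl)
    · exact hDcl.2.inter (hUO i₀).1
  have hC₁ne : C₁.Nonempty := ⟨x₀, hx₀D, hx₀U⟩
  have hC₁O : C₁ ⊆ O i₀ := inter_subset_right.trans (hUO i₀).2.2.1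
  by_cases hC₁univ : C₁ = univ
  · have hOuniv : ∀ C : Set X, C ⊆ O i₀ := by
      intro C
      have : (univ : Set X) ⊆ O i₀ := hC₁univ ▸ hC₁O
      exact (subset_univ C).trans this
    have hnoclopen : ∀ C : Set X, C.Nonempty → C ≠ univ → ¬IsClopen C := fun C h1 h2 =>
      (hUO i₀).2.2.2.2 C (hOuniv C) h1 h2
    have hsX : Subsingleton X := subsingleton_of_nocl hazd hnoclopen
    have hsH : Subsingleton (Hy P) := hy_subsingleton hne₀ hsX
    apply h𝒞univ
    exact eq_univ_of_forall fun H => (Subsingleton.elim G H) ▸ hG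
  · exact (hUO i₀).2.2.2.2 C₁ hC₁O hC₁ne hC₁univ hC₁cl

theorem hy_cohesive_fn [TopologicalSpace.MetrizableSpace X] {P : Set X → Prop}
    (hne₀ : ∀ F, P F → F.Nonempty) (hcpt : ∀ F, P F → IsCompact F)
    (n : ℕ) (hn : 0 < n)
    (hrange : ∀ x : Fin n → X, P (Set.range x))
    (hsurj : ∀ G : Hy P, ∃ x : Fin n → X, Set.range x = G.1)
    (hcoh : Cohesive X) (hazd : IsAZD X) : Cohesive (Hy P) := by
  letI mX : MetricSpace X := TopologicalSpace.metrizableSpaceMetric X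
  apply cohesive_of_clopen
  intro F
  obtain ⟨m, U, O, hm, hUO, hUdisj, hFsub, hFmeet⟩ :=
    exists_good_cover hcoh hazd (hcpt _ F.2) (hne₀ _ F.2)
  set 𝒰 : Set (Hy P) := {G | G.1 ⊆ ⋃ i, U i} ∩ ⋂ i, {G : Hy P | (G.1 ∩ U i).Nonempty}
    with h𝒰def
  have h𝒰open : IsOpen 𝒰 :=
    (hopen_sub hne₀ (isOpen_iUnion fun i => (hUO i).1)).inter
      (isOpen_iInter_of_finite fun i => hopen_meet (hUO i).1)
  have hF𝒰 : F ∈ 𝒰 := ⟨hFsub, mem_iInter.2 fun i => hFmeet i⟩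
  refine ⟨𝒰, h𝒰open.mem_nhds hF𝒰, ?_⟩
  intro 𝒞 h𝒞𝒰 h𝒞ne h𝒞univ h𝒞cl
  obtain ⟨G, hG⟩ := h𝒞ne
  have hπ : Continuous fun x : Fin n → X => Hy.mk P (Set.range x) (hrange x) :=
    hcont_mk _ _ (vcont_range n)
  set D : Set (Fin n → X) := (fun x : Fin n → X => Hy.mk P (Set.range x) (hrange x)) ⁻¹' 𝒞
    with hDdef
  have hDcl : IsClopen D := h𝒞cl.preimage hπ
  obtain ⟨g, hgval⟩ := hsurj G
  have hgD : g ∈ D := by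
    show Hy.mk P (Set.range g) _ ∈ 𝒞
    have : Hy.mk P (Set.range g) (hrange g) = G := Subtype.ext hgval
    rw [this]; exact hG
  have hgbox : ∀ i, ∃ j, g i ∈ U j := by
    intro i
    have h1 : (Hy.mk P (Set.range g) (hrange g)).1 ⊆ ⋃ j, U j := (h𝒞𝒰 hgD).1
    exact mem_iUnion.1 (h1 (mem_range_self i))
  choose σ hσ using hgbox
  set B : Set (Fin n → X) := D ∩ Set.pi univ (fun i => U (σ i)) with hBdef
  have hBcl : IsClopen B := by
    constructor
    · apply isClosed_of_closure_subset
      intro q hq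
      have hqD : q ∈ D := by
        have := (closure_mono inter_subset_left) hq
        rwa [hDcl.1.closure_eq] at this
      refine ⟨hqD, ?_⟩
      have hqcl : q ∈ Set.pi univ (fun i => closure (U (σ i))) := by
        have h1 := (closure_mono inter_subset_right) hq
        rwa [closure_pi_set] at h1
      intro i _
      have hqi : q i ∈ ⋃ j, U j := by
        have h1 : (Hy.mk P (Set.range q) (hrange q)).1 ⊆ ⋃ j, U j := (h𝒞𝒰 hqD).1
        exact h1 (mem_range_self i)
      obtain ⟨j, hj⟩ := mem_iUnion.1 hqi
      show q i ∈ U (σ i)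
      by_cases hji : j = σ i
      · rw [← hji]; exact hj
      · exact absurd (hqcl i (mem_univ i))
          (fun hc => (hUdisj j (σ i) hji).ne_of_mem (subset_closure hj) hc rfl)
    · exact hDcl.2.inter (isOpen_set_pi finite_univ (fun i _ => (hUO (σ i)).1))
  have hgB : g ∈ B := ⟨hgD, fun i _ => hσ i⟩
  set i₀ : Fin n := ⟨0, hn⟩
  have hupd : Continuous fun xx : X => Function.update g i₀ xx := by
    apply continuous_pi
    intro j
    by_cases hj : j = i₀
    · have : (fun xx : X => Function.update g i₀ xx j) = fun xx => xx := by
        funext xx; rw [hj, Function.update_self]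
      rw [this]; exact continuous_id
    · have : (fun xx : X => Function.update g i₀ xx j) = fun _ => g j := by
        funext xx; rw [Function.update_of_ne hj]
      rw [this]; exact continuous_const
  set C₁ : Set X := (fun xx : X => Function.update g i₀ xx) ⁻¹' B with hC₁def
  have hC₁cl : IsClopen C₁ := hBcl.preimage hupd
  have hC₁ne : C₁.Nonempty := ⟨g i₀, by
    show Function.update g i₀ (g i₀) ∈ B
    rw [Function.update_eq_self]
    exact hgB⟩
  have hC₁O : C₁ ⊆ O (σ i₀) := by
    intro x hx
    have h1 : Function.update g i₀ x ∈ Set.pi univ (fun i => U (σ i)) := hx.2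
    have h2 := h1 i₀ (mem_univ i₀)
    rw [Function.update_self] at h2
    exact (hUO (σ i₀)).2.2.1 h2
  by_cases hC₁univ : C₁ = univ
  · have hOuniv : ∀ C : Set X, C ⊆ O (σ i₀) := by
      intro C
      have h1 : (univ : Set X) ⊆ O (σ i₀) := hC₁univ ▸ hC₁O
      exact (subset_univ C).trans h1
    have hnoclopen : ∀ C : Set X, C.Nonempty → C ≠ univ → ¬IsClopen C := fun C h1 h2 =>
      (hUO (σ i₀)).2.2.2.2 C (hOuniv C) h1 h2
    have hsX : Subsingleton X := subsingleton_of_nocl hazd hnoclopen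
    have hsH : Subsingleton (Hy P) := hy_subsingleton hne₀ hsX
    apply h𝒞univ
    exact eq_univ_of_forall fun H => (Subsingleton.elim G H) ▸ hG
  · exact (hUO (σ i₀)).2.2.2.2 C₁ hC₁O hC₁ne hC₁univ hC₁cl

end HypAux
theorem hyperspaces_cohesive_and_isAZD' {X : Type*} [TopologicalSpace X]
    [TopologicalSpace.MetrizableSpace X]
    (hcoh : Cohesive X) (hazd : IsAZD X) :
    (∀ n : ℕ, 1 ≤ n → Cohesive (HypAux.Hy (fun F : Set X => F.Nonempty ∧ F.Finite ∧ F.ncard ≤ n))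
        ∧ IsAZD (HypAux.Hy (fun F : Set X => F.Nonempty ∧ F.Finite ∧ F.ncard ≤ n))) ∧
    (Cohesive (HypAux.Hy (fun F : Set X => F.Nonempty ∧ F.Finite))
      ∧ IsAZD (HypAux.Hy (fun F : Set X => F.Nonempty ∧ F.Finite))) ∧
    (Cohesive (HypAux.Hy (fun F : Set X => F.Nonempty ∧ IsCompact F))
      ∧ IsAZD (HypAux.Hy (fun F : Set X => F.Nonempty ∧ IsCompact F))) := by
  refine ⟨?_, ⟨?_, ?_⟩, ⟨?_, ?_⟩⟩
  · intro n hn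
    set P : Set X → Prop := fun F => F.Nonempty ∧ F.Finite ∧ F.ncard ≤ n with hPdef
    have hne₀ : ∀ F, P F → F.Nonempty := fun F h => h.1
    have hcpt : ∀ F, P F → IsCompact F := fun F h => h.2.1.isCompact
    have hrange : ∀ x : Fin n → X, P (Set.range x) := by
      intro x
      refine ⟨⟨x ⟨0, hn⟩, mem_range_self _⟩, finite_range x, ?_⟩
      have h1 : Set.range x = x '' univ := image_univ.symm
      rw [h1]
      calc (x '' univ).ncard ≤ (univ : Set (Fin n)).ncard := ncard_image_le finite_univ
        _ = n := by rw [ncard_univ]; simp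
    have hsurj : ∀ G : HypAux.Hy P, ∃ x : Fin n → X, Set.range x = G.1 := by
      intro G
      obtain ⟨hGne, hGfin, hGcard⟩ := G.2
      haveI : Finite G.1 := hGfin.to_subtype
      haveI : Nonempty G.1 := hGne.to_subtype
      set k := Nat.card G.1 with hkdef
      have hk1 : 0 < k := Nat.card_pos
      have hkn : k ≤ n := by
        rw [hkdef, Nat.card_coe_set_eq]
        exact hGcard
      set e : G.1 ≃ Fin k := Finite.equivFin _ with hedef
      have hlt : ∀ i : Fin n, min i.1 (k - 1) < k :=
        fun i => lt_of_le_of_lt (min_le_right _ _) (Nat.pred_lt hk1.ne')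
      refine ⟨fun i => (e.symm ⟨min i.1 (k - 1), hlt i⟩).1, ?_⟩
      apply Subset.antisymm
      · rintro y ⟨i, rfl⟩
        exact (e.symm _).2
      · intro y hy
        have hik : ((e ⟨y, hy⟩) : Fin k).1 < k := (e ⟨y, hy⟩).2
        refine ⟨⟨(e ⟨y, hy⟩).1, lt_of_lt_of_le hik hkn⟩, ?_⟩
        have heq : (⟨min (⟨(e ⟨y, hy⟩).1, lt_of_lt_of_le hik hkn⟩ : Fin n).1 (k - 1),
            hlt _⟩ : Fin k) = e ⟨y, hy⟩ := by
          apply Fin.ext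
          exact Nat.min_eq_left (Nat.le_pred_of_lt hik)
        beta_reduce
        rw [heq, Equiv.symm_apply_apply]
    exact ⟨HypAux.hy_cohesive_fn hne₀ hcpt n hn hrange hsurj hcoh hazd,
      HypAux.hy_isAZD hne₀ hcpt hazd⟩
  · exact HypAux.hy_cohesive_union (fun F h => h.1) (fun F h => h.2.isCompact)
      (fun F x h => ⟨h.1.mono subset_union_left, h.2.union (finite_singleton x)⟩) hcoh hazd
  · exact HypAux.hy_isAZD (fun F h => h.1) (fun F h => h.2.isCompact) hazd
  · exact HypAux.hy_cohesive_union (fun F h => h.1) (fun F h => h.2)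
      (fun F x h => ⟨h.1.mono subset_union_left, h.2.union isCompact_singleton⟩) hcoh hazd
  · exact HypAux.hy_isAZD (fun F h => h.1) (fun F h => h.2) hazd

/-- If `X` is a separable metrizable space that is cohesive and almost zero-dimensional,
then so are `F_n(X)` (for every `n ≥ 1`), `F(X)` and `K(X)`. -/
theorem hyperspaces_cohesive_and_isAZD {X : Type*} [TopologicalSpace X]
    [TopologicalSpace.MetrizableSpace X] [TopologicalSpace.SeparableSpace X]
    (hcoh : Cohesive X) (hazd : IsAZD X) :
    (∀ n : ℕ, 1 ≤ n → Cohesive (HypFn n X) ∧ IsAZD (HypFn n X)) ∧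
    (Cohesive (HypFin X) ∧ IsAZD (HypFin X)) ∧
    (Cohesive (HypK X) ∧ IsAZD (HypK X)) := by
  obtain ⟨h1, h2, h3⟩ := hyperspaces_cohesive_and_isAZD' hcoh hazd
  exact ⟨fun n hn => h1 n hn, h2, h3⟩
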